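/- arXiv:1407.5031 — 2 statements merged into one kernel-verified Lean document; each statement's English description precedes it below -/
import Mathlib

section
/- Let U and E be real vector spaces and let J : U × E → ℝ be a nonnegative function that is jointly square-homogeneous (J(c•u, c•x) = c²·J(u,x) for all c ∈ ℝ, u ∈ U, x ∈ E) and satisfies the joint parallelogram law: J(u+v, x+y) + J(u−v, x−y) = 2·J(u,x) + 2·J(v,y) for all u, v ∈ U and x, y ∈ E. Define V(x) := ⨅_{u ∈ U} J(u, x) and assume that for every x ∈ E the infimum is attained, i.e. there exists u(x) ∈ U with J(u(x), x) = V(x). Then V satisfies the parallelogram law: V(x+y) + V(x−y) = 2·V(x) + 2·V(y) for all x, y ∈ E. -/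
/-- The value function `V x = ⨅ u, J (u, x)` of a nonnegative, jointly
square-homogeneous cost `J` satisfying the joint parallelogram law, whose infimum is
attained for every `x`, itself satisfies the parallelogram law
`V (x+y) + V (x-y) = 2 V x + 2 V y`. -/
theorem value_field_parallelogram
    {U E : Type*} [AddCommGroup U] [Module ℝ U] [AddCommGroup E] [Module ℝ E]
    (J : U × E → ℝ)
    (hJ_nonneg : ∀ (u : U) (x : E), 0 ≤ J (u, x))
    (hJ_hom : ∀ (c : ℝ) (u : U) (x : E), J (c • u, c • x) = c ^ 2 * J (u, x))
    (hJ_par : ∀ (u v : U) (x y : E),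
      J (u + v, x + y) + J (u - v, x - y) = 2 * J (u, x) + 2 * J (v, y))
    (V : E → ℝ) (hV : ∀ x : E, V x = ⨅ u : U, J (u, x))
    (hattain : ∀ x : E, ∃ u : U, J (u, x) = V x) :
    ∀ x y : E, V (x + y) + V (x - y) = 2 * V x + 2 * V y := by
  have V_le : ∀ (x : E) (u : U), V x ≤ J (u, x) := by
    intro x u
    rw [hV]
    exact ciInf_le ⟨0, by rintro _ ⟨w, rfl⟩; exact hJ_nonneg w x⟩ u
  intro x y
  obtain ⟨ux, hux⟩ := hattain x
  obtain ⟨uy, huy⟩ := hattain y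
  obtain ⟨a, ha⟩ := hattain (x + y)
  obtain ⟨b, hb⟩ := hattain (x - y)
  have h1 : V (x + y) + V (x - y) ≤ 2 * V x + 2 * V y := by
    have := hJ_par ux uy x y
    have l1 := V_le (x + y) (ux + uy)
    have l2 := V_le (x - y) (ux - uy)
    linarith [hux, huy]
  have h2 : 2 * V x + 2 * V y ≤ V (x + y) + V (x - y) := by
    set u := (1/2 : ℝ) • (a + b) with hu
    set v := (1/2 : ℝ) • (a - b) with hvv
    have huv1 : u + v = a := by rw [hu, hvv]; module
    have huv2 : u - v = b := by rw [hu, hvv]; module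
    have hp := hJ_par u v x y
    rw [huv1, huv2] at hp
    have l1 := V_le x u
    have l2 := V_le y v
    linarith [ha, hb]
  linarith
end

section
/- Let U be a real vector space and let q : U × ℝⁿ → ℝ be a nonnegative function that is jointly square-homogeneous (q(c•u, c•x) = c²·q(u,x) for all c ∈ ℝ) and satisfies the joint parallelogram law (q(u+v, x+y) + q(u−v, x−y) = 2·q(u,x) + 2·q(v,y)). Assume there is a constant λ ≥ 0 with q(0, x) ≤ λ·‖x‖² for all x ∈ ℝⁿ, and that for every x ∈ ℝⁿ there exists u(x) ∈ U with q(u(x), x) = ⨅_{u ∈ U} q(u, x). Then there exists a symmetric positive semidefinite n×n real matrix K with ⟨K x, x⟩ ≤ λ·‖x‖² for all x, such that ⨅_{u ∈ U} q(u, x) = ⟨K x, x⟩ for every x ∈ ℝⁿ. -/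
open Matrix

set_option maxHeartbeats 1000000

/-- The value function `x ↦ ⨅ u, q (u, x)` of a nonnegative, jointly
square-homogeneous cost `q` satisfying the joint parallelogram law, with
`q (0, x) ≤ λ ‖x‖²` and attained infima, is a quadratic form `⟨K x, x⟩` for a symmetric
positive semidefinite matrix `K` with `⟨K x, x⟩ ≤ λ ‖x‖²`. -/
theorem value_field_is_quadratic_form
    {U : Type*} [AddCommGroup U] [Module ℝ U] {n : ℕ} (hn : 0 < n)
    (q : U × (Fin n → ℝ) → ℝ) (lam : ℝ) (hlam : 0 ≤ lam)
    (hq_nonneg : ∀ (u : U) (x : Fin n → ℝ), 0 ≤ q (u, x))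
    (hq_hom : ∀ (c : ℝ) (u : U) (x : Fin n → ℝ), q (c • u, c • x) = c ^ 2 * q (u, x))
    (hq_par : ∀ (u v : U) (x y : Fin n → ℝ),
      q (u + v, x + y) + q (u - v, x - y) = 2 * q (u, x) + 2 * q (v, y))
    (hq_bd : ∀ x : Fin n → ℝ, q (0, x) ≤ lam * (x ⬝ᵥ x))
    (hattain : ∀ x : Fin n → ℝ, ∃ u : U, q (u, x) = ⨅ w : U, q (w, x)) :
    ∃ K : Matrix (Fin n) (Fin n) ℝ,
      K.IsSymm ∧ K.PosSemidef ∧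
      (∀ x : Fin n → ℝ, K.mulVec x ⬝ᵥ x ≤ lam * (x ⬝ᵥ x)) ∧
      (∀ x : Fin n → ℝ, (⨅ u : U, q (u, x)) = K.mulVec x ⬝ᵥ x) := by
  set V : (Fin n → ℝ) → ℝ := fun x => ⨅ u : U, q (u, x) with hVdef
  have hdot_nonneg : ∀ x : Fin n → ℝ, 0 ≤ x ⬝ᵥ x := fun x =>
    Finset.sum_nonneg fun i _ => mul_self_nonneg (x i)
  have hbdd : ∀ x : Fin n → ℝ, BddBelow (Set.range fun u : U => q (u, x)) := fun x =>
    ⟨0, by rintro r ⟨u, rfl⟩; exact hq_nonneg u x⟩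
  have hV_le : ∀ (u : U) (x : Fin n → ℝ), V x ≤ q (u, x) := fun u x => ciInf_le (hbdd x) u
  have hV_nonneg : ∀ x, 0 ≤ V x := fun x => le_ciInf fun u => hq_nonneg u x
  have hV_bd : ∀ x, V x ≤ lam * (x ⬝ᵥ x) := fun x => (hV_le 0 x).trans (hq_bd x)
  have hV0 : V 0 = 0 := by
    have h1 : q (0, 0) = 0 := by
      have := hq_hom 0 0 0
      simpa using this
    have h2 : V 0 ≤ 0 := h1 ▸ hV_le 0 0
    exact le_antisymm h2 (hV_nonneg 0)
  -- V(c•x) ≤ c² V x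
  have hVle_hom : ∀ (c : ℝ) (x : Fin n → ℝ), V (c • x) ≤ c ^ 2 * V x := by
    intro c x
    obtain ⟨u, hu⟩ := hattain x
    calc V (c • x) ≤ q (c • u, c • x) := hV_le _ _
      _ = c ^ 2 * q (u, x) := hq_hom c u x
      _ = c ^ 2 * V x := by rw [hu]
  have hV_hom : ∀ (c : ℝ) (x : Fin n → ℝ), V (c • x) = c ^ 2 * V x := by
    intro c x
    rcases eq_or_ne c 0 with rfl | hc
    · simpa using hV0
    · refine le_antisymm (hVle_hom c x) ?_
      have h2 := hVle_hom c⁻¹ (c • x)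
      rw [inv_smul_smul₀ hc] at h2
      have hc2 : (0:ℝ) < c ^ 2 := by positivity
      rw [inv_pow] at h2
      have h3 : c ^ 2 * V x ≤ c ^ 2 * ((c ^ 2)⁻¹ * V (c • x)) :=
        mul_le_mul_of_nonneg_left h2 hc2.le
      rwa [← mul_assoc, mul_inv_cancel₀ hc2.ne', one_mul] at h3
  have hV_neg : ∀ x, V (-x) = V x := by
    intro x
    have := hV_hom (-1) x
    simpa using this
  -- parallelogram inequality, then equality
  have hpar_le : ∀ x y, V (x + y) + V (x - y) ≤ 2 * V x + 2 * V y := by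
    intro x y
    obtain ⟨u, hu⟩ := hattain x
    obtain ⟨v, hv⟩ := hattain y
    have h1 : V (x + y) ≤ q (u + v, x + y) := hV_le _ _
    have h2 : V (x - y) ≤ q (u - v, x - y) := hV_le _ _
    have h3 := hq_par u v x y
    rw [hu, hv] at h3
    linarith
  have hpar : ∀ x y, V (x + y) + V (x - y) = 2 * V x + 2 * V y := by
    intro x y
    refine le_antisymm (hpar_le x y) ?_
    have h := hpar_le (x + y) (x - y)
    have e1 : (x + y) + (x - y) = (2:ℝ) • x := by module
    have e2 : (x + y) - (x - y) = (2:ℝ) • y := by module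
    rw [e1, e2, hV_hom, hV_hom] at h
    nlinarith
  -- polarization
  set B : (Fin n → ℝ) → (Fin n → ℝ) → ℝ := fun x y => (V (x + y) - V (x - y)) / 4 with hBdef
  have hBsymm : ∀ x y, B x y = B y x := by
    intro x y
    have h1 : V (y - x) = V (x - y) := by rw [← hV_neg (x - y)]; ring_nf
    simp only [hBdef]
    rw [add_comm y x, h1]
  have hBdiag : ∀ x, B x x = V x := by
    intro x
    have e1 : x + x = (2:ℝ) • x := by module
    simp only [hBdef]
    rw [sub_self, hV0, e1, hV_hom]
    ring
  have hB0 : ∀ y, B 0 y = 0 := by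
    intro y
    simp only [hBdef, zero_add, zero_sub, hV_neg]
    ring
  have hBmid : ∀ x z y, B (x + z) y + B (x - z) y = 2 * B x y := by
    intro x z y
    have h1 := hpar (x + y) z
    have h2 := hpar (x - y) z
    have e1 : x + z + y = (x + y) + z := by module
    have e2 : x - z + y = (x + y) - z := by module
    have e3 : x + z - y = (x - y) + z := by module
    have e4 : x - z - y = (x - y) - z := by module
    simp only [hBdef]
    rw [e1, e2, e3, e4]
    linarith
  have hBadd : ∀ a b y, B (a + b) y = B a y + B b y := by
    intro a b y
    have hx : ((2:ℝ)⁻¹ • (a + b)) + ((2:ℝ)⁻¹ • (a - b)) = a := by module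
    have hz : ((2:ℝ)⁻¹ • (a + b)) - ((2:ℝ)⁻¹ • (a - b)) = b := by module
    have h1 := hBmid ((2:ℝ)⁻¹ • (a + b)) ((2:ℝ)⁻¹ • (a - b)) y
    rw [hx, hz] at h1
    have h2 := hBmid ((2:ℝ)⁻¹ • (a + b)) ((2:ℝ)⁻¹ • (a + b)) y
    have hd : ((2:ℝ)⁻¹ • (a + b)) + ((2:ℝ)⁻¹ • (a + b)) = a + b := by module
    have hs : ((2:ℝ)⁻¹ • (a + b)) - ((2:ℝ)⁻¹ • (a + b)) = (0 : Fin n → ℝ) := sub_self _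
    rw [hd, hs, hB0] at h2
    linarith
  -- real homogeneity in the first slot
  have hBsmul : ∀ (c : ℝ) (x y : Fin n → ℝ), B (c • x) y = c * B x y := by
    intro c x y
    set f : ℝ →+ ℝ := AddMonoidHom.mk' (fun t => B (t • x) y)
      (fun s t => by
        show B ((s + t) • x) y = B (s • x) y + B (t • x) y
        rw [add_smul]; exact hBadd _ _ _) with hfdef
    have hfq : ∀ (r : ℚ) (t : ℝ), f ((r : ℝ) * t) = (r : ℝ) * f t := by
      intro r t
      have := map_ratCast_smul f ℝ ℝ r t
      simpa [smul_eq_mul] using this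
    set M : ℝ := lam * (x ⬝ᵥ x + y ⬝ᵥ y) / 2 with hMdef
    have hM : 0 ≤ M := by
      have := hdot_nonneg x; have := hdot_nonneg y; positivity
    have hfbd : ∀ s : ℝ, |s| ≤ 1 → |f s| ≤ M := by
      intro s hs
      have hdots : ((s • x + y) ⬝ᵥ (s • x + y)) + ((s • x - y) ⬝ᵥ (s • x - y))
          = 2 * s ^ 2 * (x ⬝ᵥ x) + 2 * (y ⬝ᵥ y) := by
        simp [add_dotProduct, dotProduct_add, sub_dotProduct, dotProduct_sub,
          smul_dotProduct, dotProduct_smul, dotProduct_comm x y, smul_eq_mul]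
        ring
      have hsum : lam * ((s • x + y) ⬝ᵥ (s • x + y)) + lam * ((s • x - y) ⬝ᵥ (s • x - y))
          ≤ 4 * M := by
        have hs2 : s ^ 2 ≤ 1 := by
          have := abs_le.mp hs
          nlinarith
        have hX := hdot_nonneg x
        have hXs : s ^ 2 * (x ⬝ᵥ x) ≤ x ⬝ᵥ x := by nlinarith
        calc lam * ((s • x + y) ⬝ᵥ (s • x + y)) + lam * ((s • x - y) ⬝ᵥ (s • x - y))
            = lam * (((s • x + y) ⬝ᵥ (s • x + y)) + ((s • x - y) ⬝ᵥ (s • x - y))) := by ring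
          _ = lam * (2 * s ^ 2 * (x ⬝ᵥ x) + 2 * (y ⬝ᵥ y)) := by rw [hdots]
          _ ≤ lam * (2 * (x ⬝ᵥ x) + 2 * (y ⬝ᵥ y)) :=
              mul_le_mul_of_nonneg_left (by linarith) hlam
          _ = 4 * M := by rw [hMdef]; ring
      have hb1 : V (s • x + y) ≤ lam * ((s • x + y) ⬝ᵥ (s • x + y)) := hV_bd _
      have hb2 : V (s • x - y) ≤ lam * ((s • x - y) ⬝ᵥ (s • x - y)) := hV_bd _
      have hn1 : 0 ≤ V (s • x + y) := hV_nonneg _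
      have hn2 : 0 ≤ V (s • x - y) := hV_nonneg _
      have hd1 : 0 ≤ lam * ((s • x + y) ⬝ᵥ (s • x + y)) :=
        mul_nonneg hlam (hdot_nonneg _)
      have hd2 : 0 ≤ lam * ((s • x - y) ⬝ᵥ (s • x - y)) :=
        mul_nonneg hlam (hdot_nonneg _)
      have : f s = (V (s • x + y) - V (s • x - y)) / 4 := rfl
      rw [this, abs_le]
      constructor <;> [skip; skip] <;> nlinarith
    -- f t = t * f 1
    have hflin : ∀ t : ℝ, f t = t * f 1 := by
      intro t
      have key : ∀ ε : ℝ, 0 < ε → |f t - t * f 1| ≤ ε := by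
        intro ε hε
        obtain ⟨k, hk⟩ := exists_nat_gt ((M + |f 1| + |t| * |f 1|) / ε + 1)
        have hk0 : (0:ℝ) < k := by
          have h0 : 0 ≤ (M + |f 1| + |t| * |f 1|) / ε := by positivity
          linarith
        obtain ⟨r, hr⟩ := exists_rat_near t (by positivity : (0:ℝ) < 1 / k)
        have hsplit : f t = f ((r : ℝ)) + f (t - r) := by
          rw [← map_add]; ring_nf
        have hfr : f ((r : ℝ)) = (r : ℝ) * f 1 := by
          have := hfq r 1
          simpa using this
        have hscale : f ((k : ℝ) * (t - r)) = (k : ℝ) * f (t - r) := by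
          have := hfq (k : ℚ) (t - r)
          simpa using this
        have habs : |(k : ℝ) * (t - r)| ≤ 1 := by
          rw [abs_mul, abs_of_pos hk0]
          calc (k:ℝ) * |t - r| ≤ (k:ℝ) * (1 / k) := by
                exact mul_le_mul_of_nonneg_left (le_of_lt hr) (le_of_lt hk0)
            _ = 1 := by field_simp
        have hfs : |f (t - r)| ≤ M / k := by
          have h1 := hfbd _ habs
          rw [hscale, abs_mul, abs_of_pos hk0] at h1
          rw [le_div_iff₀ hk0, mul_comm]
          exact h1
        have hrt : |(r : ℝ) - t| ≤ 1 / k := by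
          rw [abs_sub_comm]; exact le_of_lt hr
        have : |f t - t * f 1| ≤ M / k + (1 / k) * |f 1| := by
          rw [hsplit, hfr]
          have expand : (r : ℝ) * f 1 + f (t - r) - t * f 1
              = f (t - r) + ((r : ℝ) - t) * f 1 := by ring
          rw [expand]
          calc |f (t - r) + ((r:ℝ) - t) * f 1| ≤ |f (t - r)| + |((r:ℝ) - t) * f 1| :=
                abs_add_le _ _
            _ ≤ M / k + (1 / k) * |f 1| := by
                rw [abs_mul]
                exact add_le_add hfs (mul_le_mul_of_nonneg_right hrt (abs_nonneg _))
        refine this.trans ?_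
        have hkb : (M + |f 1| + |t| * |f 1|) / ε < k := by linarith
        have h2 : M + |f 1| < k * ε := by
          have h3 : (M + |f 1| + |t| * |f 1|) < k * ε := by
            rw [div_lt_iff₀ hε] at hkb; linarith [mul_nonneg (abs_nonneg t) (abs_nonneg (f 1))]
          linarith [mul_nonneg (abs_nonneg t) (abs_nonneg (f 1))]
        have h4 : M / k + (1 / k) * |f 1| = (M + |f 1|) / k := by ring
        rw [h4, div_le_iff₀ hk0]
        linarith
      have h0 : |f t - t * f 1| ≤ 0 := by
        by_contra h
        push_neg at h
        have := key (|f t - t * f 1| / 2) (by linarith)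
        linarith
      have := abs_nonneg (f t - t * f 1)
      have heq : |f t - t * f 1| = 0 := le_antisymm h0 this
      have := abs_eq_zero.mp heq
      linarith
    have h1 : f c = c * f 1 := hflin c
    simpa [hfdef, AddMonoidHom.mk'_apply, one_smul] using h1
  -- bundle and expand over the standard basis
  set e : Fin n → (Fin n → ℝ) := fun i => Pi.single i 1 with hedef
  have hBexp1 : ∀ x y, B x y = ∑ i, x i * B (e i) y := by
    intro x y
    set L : (Fin n → ℝ) →ₗ[ℝ] ℝ :=
      { toFun := fun z => B z y
        map_add' := fun a b => hBadd a b y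
        map_smul' := fun c a => by simpa [smul_eq_mul] using hBsmul c a y } with hLdef
    have hx : x = ∑ i, x i • e i := by
      have h1 : ∀ i, x i • e i = Pi.single i (x i) := by
        intro i
        simp [hedef, ← Pi.single_smul, smul_eq_mul]
      rw [Finset.sum_congr rfl fun i _ => h1 i, Finset.univ_sum_single]
    calc B x y = L x := rfl
      _ = L (∑ i, x i • e i) := by rw [← hx]
      _ = ∑ i, x i * B (e i) y := by
          rw [map_sum]
          exact Finset.sum_congr rfl fun i _ => by simp [hLdef, smul_eq_mul]
  have hBexp : ∀ x y, B x y = ∑ i, ∑ j, x i * y j * B (e i) (e j) := by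
    intro x y
    rw [hBexp1 x y]
    refine Finset.sum_congr rfl fun i _ => ?_
    rw [hBsymm (e i) y, hBexp1 y (e i), Finset.mul_sum]
    exact Finset.sum_congr rfl fun j _ => by rw [hBsymm (e j) (e i)]; ring
  -- define K
  have hval : ∀ x : Fin n → ℝ,
      (Matrix.of (fun i j => B (e i) (e j))).mulVec x ⬝ᵥ x = V x := by
    intro x
    rw [← hBdiag x, hBexp x x]
    simp only [Matrix.mulVec, dotProduct, Matrix.of_apply]
    refine Finset.sum_congr rfl fun i _ => ?_
    rw [Finset.sum_mul]
    refine Finset.sum_congr rfl fun j _ => ?_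
    ring
  refine ⟨Matrix.of (fun i j => B (e i) (e j)), ?_, ?_, ?_, ?_⟩
  · ext i j
    simp [Matrix.transpose_apply, hBsymm]
  · rw [Matrix.posSemidef_iff_dotProduct_mulVec]; constructor
    · ext i j
      simp [Matrix.conjTranspose_apply, hBsymm]
    · intro x
      have : star x ⬝ᵥ (Matrix.of (fun i j => B (e i) (e j))) *ᵥ x
          = (Matrix.of (fun i j => B (e i) (e j))).mulVec x ⬝ᵥ x := by
        rw [dotProduct_comm]; rfl
      rw [this, hval x]
      exact hV_nonneg x
  · intro x
    rw [hval x]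
    exact hV_bd x
  · intro x
    rw [hval x]
end
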